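/- Let q be a real number with q > 0 and q ≠ 1 and let A_1 be a complex number. The polynomial W(x,y) = x^3 + A_1 x y^2 satisfies W((x+(q-1)y)/√q, (x-y)/√q) = -W(x,y) identically if and only if q = 4 and A_1 = -9. In particular, φ_3(x,y) = x^3 - 9 x y^2 is the unique formal weight enumerator of degree 3 divisible by two, and it has q = 4. -/

import Mathlib

/-- Case n=1 of the odd-degree search: `W(x,y) = x³ + A₁xy²` satisfies
`W^{σ_q} = -W` if and only if `q = 4` and `A₁ = -9`; that is,
`φ₃(x,y) = x³ - 9xy²` is the unique formal weight enumerator of degree 3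
divisible by two, and it has `q = 4`. -/
theorem fwe_degree_three_unique (q : ℝ) (hq0 : 0 < q) (hq1 : q ≠ 1) (A1 : ℂ) :
    (∀ x y : ℂ,
        ((x + ((q : ℂ) - 1) * y) / (Real.sqrt q : ℂ)) ^ 3 +
            A1 * ((x + ((q : ℂ) - 1) * y) / (Real.sqrt q : ℂ)) *
              ((x - y) / (Real.sqrt q : ℂ)) ^ 2
          = -(x ^ 3 + A1 * x * y ^ 2))
      ↔ (q = 4 ∧ A1 = -9) := by
  have hsq : ((Real.sqrt q : ℂ))^2 = (q:ℂ) := by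
    norm_cast; exact Real.sq_sqrt hq0.le
  have hsne : ((Real.sqrt q : ℂ)) ≠ 0 := by
    simpa using (Real.sqrt_pos.mpr hq0).ne'
  constructor
  · intro h
    have h0 := h 1 0
    have h1 := h 0 1
    have h2 := h 1 (-1)
    field_simp at h0 h1 h2
    have hs3 : ((Real.sqrt q : ℂ))^3 ≠ 0 := pow_ne_zero 3 hsne
    have hq1C : (q:ℂ) - 1 ≠ 0 := sub_ne_zero.mpr (by
      exact_mod_cast hq1)
    -- A1 = -(q-1)^2
    have hA : A1 = -((q:ℂ)-1)^2 := by
      have hne : ((q:ℂ)-1) * ((Real.sqrt q : ℂ))^3 ≠ 0 := mul_ne_zero hq1C hs3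
      have hmul : (((q:ℂ)-1) * ((Real.sqrt q : ℂ))^3) * (((q:ℂ)-1)^2 + A1) = 0 := by
        linear_combination ((Real.sqrt q : ℂ))^3 * h1
      have := (mul_eq_zero.mp hmul).resolve_left hne
      linear_combination this
    -- 1 + A1 = -s^3
    have hT : (1:ℂ) + A1 = -((Real.sqrt q : ℂ))^3 := by
      have hmul : ((Real.sqrt q : ℂ))^3 * ((1 + A1) + ((Real.sqrt q : ℂ))^3) = 0 := by
        linear_combination ((Real.sqrt q : ℂ))^3 * h0
      have := (mul_eq_zero.mp hmul).resolve_left hs3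
      linear_combination this
    -- (2-q)^3 + 4 A1 (2-q) = q^3
    have h2' : (2-(q:ℂ))^3 + 4*A1*(2-(q:ℂ)) = (q:ℂ)^3 := by
      apply mul_right_cancel₀ hs3
      linear_combination ((Real.sqrt q : ℂ))^3 * h2 - ((Real.sqrt q : ℂ))^6 * hT +
        ((q:ℂ)^2 + (q:ℂ)*((Real.sqrt q : ℂ))^2 + ((Real.sqrt q : ℂ))^4) * ((Real.sqrt q : ℂ))^3 * hsq
    have hqC : 2*(q:ℂ)*((q:ℂ)-1)*((q:ℂ)-4) = 0 := by
      linear_combination h2' - 4*(2-(q:ℂ))*hA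
    have hqR : 2*q*(q-1)*(q-4) = 0 := by exact_mod_cast hqC
    have h4 : q = 4 := by
      rcases mul_eq_zero.mp hqR with h' | h'
      · rcases mul_eq_zero.mp h' with h'' | h''
        · linarith
        · exact absurd (by linarith) hq1
      · linarith
    refine ⟨h4, ?_⟩
    rw [h4] at hA
    rw [hA]; norm_num
  · rintro ⟨rfl, rfl⟩
    have h4 : Real.sqrt 4 = 2 := by
      rw [show (4:ℝ) = 2^2 by norm_num, Real.sqrt_sq (by norm_num)]
    intro x y
    rw [h4]
    push_cast
    ring
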